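/- Let A, B, C be distinct square-free nonzero integers and a a nonzero rational number, and let γ be a square-free positive integer with gcd(γ, 2AB) = 1 such that L_γ = ℚ(√(γA), √(γB), √C) is a triquadratic number field. If every rational point P of the elliptic curve E_γ : Y² = X(X − a²Bγ)(X − (a²B − A)γ) satisfies 2P = O (i.e. E_γ(ℚ) consists only of 2-torsion points, equivalently E_γ has rank 0 and torsion subgroup ℤ/2ℤ × ℤ/2ℤ), then min deg_{L_γ}(√(γA) + a√(γB)) > 2 = [L_γ : ℚ(√(γA) + a√(γB))]. -/

import Mathlib

/-- The minimal degree of an algebraic number `v ∈ L`: the minimum, over all primitive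
elements `α` of `L` (i.e. `ℚ(α) = L`), of the degree of a polynomial `f ∈ ℚ[x]`
with `f(α) = v`. -/
noncomputable def minDegree (L : Type*) [Field L] [Algebra ℚ L] (v : L) : ℕ :=
  sInf {d : ℕ | ∃ α : L, IntermediateField.adjoin ℚ {α} = ⊤ ∧
    ∃ f : Polynomial ℚ, f.natDegree = d ∧ Polynomial.aeval α f = v}

/-- The quadratic twist by `γ` of the curve `Y² = X(X − a²B)(X − (a²B − A))`, namely
`Y² = X(X − a²Bγ)(X − (a²B − A)γ)` in Weierstrass form. -/
def curveETwist (A B : ℤ) (a : ℚ) (γ : ℕ) : WeierstrassCurve.Affine ℚ where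
  a₁ := 0
  a₂ := -(a ^ 2 * (B : ℚ) * (γ : ℚ) + (a ^ 2 * (B : ℚ) - (A : ℚ)) * (γ : ℚ))
  a₃ := 0
  a₄ := a ^ 2 * (B : ℚ) * (γ : ℚ) * ((a ^ 2 * (B : ℚ) - (A : ℚ)) * (γ : ℚ))
  a₆ := 0

noncomputable def quadQ (L : Type*) [Field L] [Algebra ℚ L] (u v : L) (x0 x1 x2 x3 : ℚ) : L :=
  algebraMap ℚ L x0 + algebraMap ℚ L x1 * u + algebraMap ℚ L x2 * v
    + algebraMap ℚ L x3 * (u * v)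

lemma quadQ_mul {L : Type*} [Field L] [Algebra ℚ L] {u v : L} {ga gb : ℚ}
    (hu : u ^ 2 = algebraMap ℚ L ga) (hv : v ^ 2 = algebraMap ℚ L gb)
    (x0 x1 x2 x3 z0 z1 z2 z3 : ℚ) :
    quadQ L u v x0 x1 x2 x3 * quadQ L u v z0 z1 z2 z3 =
      quadQ L u v (x0*z0 + ga*(x1*z1) + gb*(x2*z2) + ga*(gb*(x3*z3)))
        (x0*z1 + x1*z0 + gb*(x2*z3 + x3*z2))
        (x0*z2 + x2*z0 + ga*(x1*z3 + x3*z1))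
        (x0*z3 + x3*z0 + x1*z2 + x2*z1) := by
  simp only [quadQ, map_add, map_mul]
  linear_combination (algebraMap ℚ L x1 * algebraMap ℚ L z1
      + algebraMap ℚ L x3 * algebraMap ℚ L z3 * v^2
      + (algebraMap ℚ L x1 * algebraMap ℚ L z3 + algebraMap ℚ L x3 * algebraMap ℚ L z1) * v) * hu
    + (algebraMap ℚ L x2 * algebraMap ℚ L z2
      + algebraMap ℚ L ga * (algebraMap ℚ L x3 * algebraMap ℚ L z3)
      + (algebraMap ℚ L x2 * algebraMap ℚ L z3 + algebraMap ℚ L x3 * algebraMap ℚ L z2) * u) * hv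

lemma quadQ_cmul {L : Type*} [Field L] [Algebra ℚ L] {u v : L} (r x0 x1 x2 x3 : ℚ) :
    algebraMap ℚ L r * quadQ L u v x0 x1 x2 x3 = quadQ L u v (r*x0) (r*x1) (r*x2) (r*x3) := by
  simp only [quadQ, map_add, map_mul]; ring

lemma quadQ_zero {L : Type*} [Field L] [Algebra ℚ L] {u v : L} :
    quadQ L u v 0 0 0 0 = 0 := by simp [quadQ]

lemma quadQ_add {L : Type*} [Field L] [Algebra ℚ L] {u v : L} (x0 x1 x2 x3 z0 z1 z2 z3 : ℚ) :
    quadQ L u v x0 x1 x2 x3 + quadQ L u v z0 z1 z2 z3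
      = quadQ L u v (x0+z0) (x1+z1) (x2+z2) (x3+z3) := by
  simp only [quadQ, map_add]; ring

lemma indep_consume {L : Type*} [Field L] [Algebra ℚ L] {u v w : L}
    (hlin : LinearIndependent ℚ ![(1:L), u, v, u*v, w, u*w, v*w, u*v*w])
    (k0 k1 k2 k3 k4 k5 k6 k7 : ℚ)
    (h : quadQ L u v k0 k1 k2 k3 + quadQ L u v k4 k5 k6 k7 * w = 0) :
    k0 = 0 ∧ k1 = 0 ∧ k2 = 0 ∧ k3 = 0 ∧ k4 = 0 ∧ k5 = 0 ∧ k6 = 0 ∧ k7 = 0 := by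
  have h8 := Fintype.linearIndependent_iff.mp hlin ![k0,k1,k2,k3,k4,k5,k6,k7] ?_
  · exact ⟨h8 0, h8 1, h8 2, h8 3, h8 4, h8 5, h8 6, h8 7⟩
  · simp only [quadQ] at h
    rw [Fin.sum_univ_eight]
    show k0 • (1:L) + k1 • u + k2 • v + k3 • (u*v) + k4 • w + k5 • (u*w) + k6 • (v*w)
      + k7 • (u*v*w) = 0
    simp only [Algebra.smul_def]
    linear_combination h

lemma aux_sq_ne (A B : ℤ) (hA : Squarefree A) (hB : Squarefree B) (hAB : A ≠ B)
    (a : ℚ) (ha : a ≠ 0) : a ^ 2 * (B : ℚ) ≠ (A : ℚ) := by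
  intro h
  have hden : (a.den : ℚ) ≠ 0 := by positivity
  have key : (a.num : ℚ) ^ 2 * (B : ℚ) = (A : ℚ) * (a.den : ℚ) ^ 2 := by
    rw [← Rat.num_div_den a] at h
    field_simp at h
    linear_combination h
  have key' : a.num ^ 2 * B = A * (a.den : ℤ) ^ 2 := by exact_mod_cast key
  have hcop : IsCoprime (a.den : ℤ) a.num := by
    rw [Int.isCoprime_iff_gcd_eq_one, Int.gcd]
    simpa [Nat.coprime_comm] using a.reduced
  have hdvd : ((a.den : ℤ))^2 ∣ a.num ^ 2 * B := ⟨A, by linarith [key']⟩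
  have hdvdB : ((a.den : ℤ))^2 ∣ B := (hcop.pow).dvd_of_dvd_mul_left hdvd
  have hunit : IsUnit ((a.den : ℤ)) := hB _ (by rwa [← sq])
  have hden1 : (a.den : ℤ) = 1 := by
    rcases Int.isUnit_iff.mp hunit with h1 | h1
    · exact h1
    · exfalso; have : (0:ℤ) < a.den := by exact_mod_cast a.pos
      omega
  rw [hden1] at key'
  simp at key'
  have hunit2 : IsUnit a.num := hA _ ⟨B, by linarith [key']⟩
  have : a.num ^ 2 = 1 := by
    rcases Int.isUnit_iff.mp hunit2 with h1 | h1 <;> rw [h1] <;> norm_num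
  rw [this, one_mul] at key'
  exact hAB key'.symm

open WeierstrassCurve.Affine in
lemma no_point (A B : ℤ) (a : ℚ) (γ : ℕ) (hγ0 : ((γ:ℚ)) ≠ 0) (ha : a ≠ 0)
    (hB0 : (B:ℚ) ≠ 0) (habA : a^2*(B:ℚ) ≠ (A:ℚ))
    (m n : ℚ) (hm : m ≠ 0)
    (hrel : n*(1 - (γ:ℚ)*(A:ℚ)*m^2) = a*m*(1 - (γ:ℚ)*(B:ℚ)*n^2))
    (htors : ∀ P : (curveETwist A B a γ).Point, 2 • P = 0) : False := by
  obtain ⟨g, hg⟩ : ∃ g : ℚ, g = (γ:ℚ) := ⟨_, rfl⟩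
  rw [← hg] at hγ0 hrel
  obtain ⟨T, hT⟩ : ∃ T : ℚ, T = 1 + a*g*(B:ℚ)*(m*n) := ⟨_, rfl⟩
  obtain ⟨X, hX⟩ : ∃ X : ℚ, X = T/m^2 + a^2*g*(B:ℚ) - g*(A:ℚ) := ⟨_, rfl⟩
  have hm2 : m^2 ≠ 0 := pow_ne_zero 2 hm
  have hXm : X * m^2 = T + (a^2*g*(B:ℚ) - g*(A:ℚ))*m^2 := by
    rw [hX, hT]; field_simp; ring
  have hC2 : X*m^2 = (T - g*(A:ℚ)*m^2)*T := by
    rw [hXm, hT]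
    linear_combination (-(a*g*(B:ℚ)*m)) * hrel
  have s1 : (X - (a^2*(B:ℚ) - (A:ℚ))*g)*m^2 = T := by linear_combination hXm
  have s2 : (X - a^2*(B:ℚ)*g)*m^2 = T - g*(A:ℚ)*m^2 := by linear_combination hXm
  have t3 : (X*(X - a^2*(B:ℚ)*g)*(X - (a^2*(B:ℚ) - (A:ℚ))*g)*m^2)*m^2 = (X^2)*m^2 := by
    calc (X*(X - a^2*(B:ℚ)*g)*(X - (a^2*(B:ℚ) - (A:ℚ))*g)*m^2)*m^2
        = X*(((X - a^2*(B:ℚ)*g)*m^2)*((X - (a^2*(B:ℚ) - (A:ℚ))*g)*m^2)) := by ring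
      _ = X*((T - g*(A:ℚ)*m^2)*T) := by rw [s1, s2]
      _ = X*(X*m^2) := by rw [← hC2]
      _ = (X^2)*m^2 := by ring
  have t5 : X*(X - a^2*(B:ℚ)*g)*(X - (a^2*(B:ℚ) - (A:ℚ))*g)*m^2 = X^2 :=
    mul_right_cancel₀ hm2 t3
  have hX0 : X ≠ 0 := by
    intro h
    rw [h, zero_mul] at hC2 hXm
    rcases mul_eq_zero.mp hC2.symm with h1 | h1
    · have h5 : a^2*g*(B:ℚ)*m^2 = 0 := by linear_combination -hXm - h1
      have h6 := mul_ne_zero (mul_ne_zero (mul_ne_zero (pow_ne_zero 2 ha) hγ0) hB0) hm2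
      exact h6 h5
    · have h2 : (a^2*g*(B:ℚ) - g*(A:ℚ))*m^2 = 0 := by linear_combination -hXm - h1
      rcases mul_eq_zero.mp h2 with h3 | h3
      · apply habA
        have h7 : g*(a^2*(B:ℚ) - (A:ℚ)) = 0 := by linear_combination h3
        rcases mul_eq_zero.mp h7 with h4 | h4
        · exact absurd h4 hγ0
        · linarith
      · exact hm2 h3
  obtain ⟨Y, hY⟩ : ∃ Y : ℚ, Y = X/m := ⟨_, rfl⟩
  have hY0 : Y ≠ 0 := by rw [hY]; exact div_ne_zero hX0 hm
  have heq2 : Y^2 = X^3 + (-(a^2*(B:ℚ)*g + (a^2*(B:ℚ)-(A:ℚ))*g))*X^2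
      + (a^2*(B:ℚ)*g*((a^2*(B:ℚ)-(A:ℚ))*g))*X := by
    rw [hY, div_pow, div_eq_iff hm2]
    linear_combination t5.symm
  have heqn : (curveETwist A B a γ).Equation X Y := by
    rw [WeierstrassCurve.Affine.equation_iff]
    simp only [curveETwist, ← hg]
    linear_combination heq2
  have hns : (curveETwist A B a γ).Nonsingular X Y := by
    rw [WeierstrassCurve.Affine.nonsingular_iff']
    refine ⟨heqn, Or.inr ?_⟩
    simp only [curveETwist, ← hg]
    simpa using hY0
  have hYne : Y ≠ (curveETwist A B a γ).negY X Y := by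
    simp only [WeierstrassCurve.Affine.negY, curveETwist]
    intro hc
    apply hY0
    linarith
  have h2P := htors (WeierstrassCurve.Affine.Point.some _ _ hns)
  rw [two_smul, WeierstrassCurve.Affine.Point.add_self_of_Y_ne hYne] at h2P
  exact WeierstrassCurve.Affine.Point.some_ne_zero _ h2P
set_option maxHeartbeats 2000000

/-- Let `A, B, C` be distinct square-free nonzero integers, `a` a nonzero rational, and
`γ` a square-free positive integer with `gcd(γ, 2AB) = 1` such that
`L_γ = ℚ(√(γA), √(γB), √C)` is a triquadratic number field. If every rational point `P`
of `E_γ : Y² = X(X − a²Bγ)(X − (a²B − A)γ)` satisfies `2P = O`, then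
`min deg_{L_γ}(√(γA) + a√(γB)) > 2 = [L_γ : ℚ(√(γA) + a√(γB))]`. -/
theorem stmt_18 (A B C : ℤ) (hA : Squarefree A) (hB : Squarefree B) (hC : Squarefree C)
    (hAB : A ≠ B) (hAC : A ≠ C) (hBC : B ≠ C)
    (hA0 : A ≠ 0) (hB0 : B ≠ 0) (hC0 : C ≠ 0) (a : ℚ) (ha : a ≠ 0)
    (γ : ℕ) (hγsf : Squarefree γ) (hγpos : 0 < γ)
    (hγgcd : IsCoprime (γ : ℤ) (2 * A * B))
    (L : Type*) [Field L] [Algebra ℚ L] (u v w : L)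
    (hu : u ^ 2 = algebraMap ℚ L ((γ : ℚ) * (A : ℚ)))
    (hv : v ^ 2 = algebraMap ℚ L ((γ : ℚ) * (B : ℚ)))
    (hw : w ^ 2 = algebraMap ℚ L (C : ℚ))
    (hgen : IntermediateField.adjoin ℚ {u, v, w} = ⊤)
    (hdim : Module.finrank ℚ L = 8)
    (htors : ∀ P : (curveETwist A B a γ).Point, 2 • P = 0) :
    2 < minDegree L (u + algebraMap ℚ L a * v) ∧
    Module.finrank (IntermediateField.adjoin ℚ {u + algebraMap ℚ L a * v}) L = 2 := by
  have hfd : FiniteDimensional ℚ L := FiniteDimensional.of_finrank_pos (by rw [hdim]; norm_num)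
  have habA : a^2*(B:ℚ) ≠ (A:ℚ) := aux_sq_ne A B hA hB hAB a ha
  have hγQ : ((γ:ℚ)) ≠ 0 := Nat.cast_ne_zero.mpr hγpos.ne'
  have hAQ : (A:ℚ) ≠ 0 := Int.cast_ne_zero.mpr hA0
  have hBQ : (B:ℚ) ≠ 0 := Int.cast_ne_zero.mpr hB0
  have hCQ : (C:ℚ) ≠ 0 := Int.cast_ne_zero.mpr hC0
  have hu' : u ^ 2 = algebraMap ℚ L (γ:ℚ) * algebraMap ℚ L (A:ℚ) := by rw [hu, map_mul]
  have hv' : v ^ 2 = algebraMap ℚ L (γ:ℚ) * algebraMap ℚ L (B:ℚ) := by rw [hv, map_mul]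
  -- the span of the 8 standard products
  have hAlg : Algebra.adjoin ℚ ({u, v, w} : Set L) = ⊤ := by
    rw [← IntermediateField.adjoin_toSubalgebra_of_isAlgebraic
      (fun x _ => Algebra.IsAlgebraic.isAlgebraic x), hgen]
    rfl
  have hoct_mem : ∀ k0 k1 k2 k3 k4 k5 k6 k7 : ℚ,
      quadQ L u v k0 k1 k2 k3 + quadQ L u v k4 k5 k6 k7 * w ∈
        Submodule.span ℚ (Set.range ![(1:L), u, v, u*v, w, u*w, v*w, u*v*w]) := by
    intro k0 k1 k2 k3 k4 k5 k6 k7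
    rw [Submodule.mem_span_range_iff_exists_fun]
    refine ⟨![k0,k1,k2,k3,k4,k5,k6,k7], ?_⟩
    rw [Fin.sum_univ_eight]
    show k0 • (1:L) + k1 • u + k2 • v + k3 • (u*v) + k4 • w + k5 • (u*w) + k6 • (v*w)
      + k7 • (u*v*w) = _
    simp only [Algebra.smul_def, quadQ]
    ring
  have hrep : ∀ x ∈ Submodule.span ℚ (Set.range ![(1:L), u, v, u*v, w, u*w, v*w, u*v*w]),
      ∃ k : Fin 8 → ℚ, x = quadQ L u v (k 0) (k 1) (k 2) (k 3)
        + quadQ L u v (k 4) (k 5) (k 6) (k 7) * w := by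
    intro x hx
    obtain ⟨k, hk⟩ := (Submodule.mem_span_range_iff_exists_fun ℚ).mp hx
    refine ⟨k, ?_⟩
    rw [← hk, Fin.sum_univ_eight]
    show k 0 • (1:L) + k 1 • u + k 2 • v + k 3 • (u*v) + k 4 • w + k 5 • (u*w) + k 6 • (v*w)
      + k 7 • (u*v*w) = _
    simp only [Algebra.smul_def, quadQ]
    ring
  have hmulmem : ∀ x y : L, x ∈ Submodule.span ℚ (Set.range ![(1:L), u, v, u*v, w, u*w, v*w, u*v*w]) →
      y ∈ Submodule.span ℚ (Set.range ![(1:L), u, v, u*v, w, u*w, v*w, u*v*w]) →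
      x * y ∈ Submodule.span ℚ (Set.range ![(1:L), u, v, u*v, w, u*w, v*w, u*v*w]) := by
    intro x y hx hy
    obtain ⟨b, hb⟩ := hrep x hx
    obtain ⟨c, hc⟩ := hrep y hy
    have hxy : x * y =
        (quadQ L u v (b 0) (b 1) (b 2) (b 3) * quadQ L u v (c 0) (c 1) (c 2) (c 3))
        + algebraMap ℚ L (C:ℚ) *
          (quadQ L u v (b 4) (b 5) (b 6) (b 7) * quadQ L u v (c 4) (c 5) (c 6) (c 7))
        + (quadQ L u v (b 0) (b 1) (b 2) (b 3) * quadQ L u v (c 4) (c 5) (c 6) (c 7)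
           + quadQ L u v (b 4) (b 5) (b 6) (b 7) * quadQ L u v (c 0) (c 1) (c 2) (c 3)) * w := by
      rw [hb, hc, ← hw]; ring
    rw [hxy, quadQ_mul hu hv, quadQ_mul hu hv, quadQ_mul hu hv, quadQ_mul hu hv, quadQ_cmul,
      quadQ_add, quadQ_add]
    apply hoct_mem
  have htop : ∀ x : L,
      x ∈ Submodule.span ℚ (Set.range ![(1:L), u, v, u*v, w, u*w, v*w, u*v*w]) := by
    have h1m : (1:L) ∈ Submodule.span ℚ (Set.range ![(1:L), u, v, u*v, w, u*w, v*w, u*v*w]) := by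
      have := hoct_mem 1 0 0 0 0 0 0 0
      simpa [quadQ] using this
    intro x
    have hx : x ∈ (⊤ : Subalgebra ℚ L) := trivial
    rw [← hAlg] at hx
    have hle : Algebra.adjoin ℚ ({u, v, w} : Set L) ≤
        Submodule.toSubalgebra
          (Submodule.span ℚ (Set.range ![(1:L), u, v, u*v, w, u*w, v*w, u*v*w])) h1m hmulmem := by
      apply Algebra.adjoin_le
      intro t ht
      rcases ht with h | h | h
      · subst h
        have := hoct_mem 0 1 0 0 0 0 0 0
        simpa [quadQ] using this
      · subst h
        have := hoct_mem 0 0 1 0 0 0 0 0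
        simpa [quadQ] using this
      · rw [Set.mem_singleton_iff] at h; subst h
        have := hoct_mem 0 0 0 0 1 0 0 0
        simpa [quadQ] using this
    exact hle hx
  have hlin : LinearIndependent ℚ ![(1:L), u, v, u*v, w, u*w, v*w, u*v*w] :=
    linearIndependent_of_top_le_span_of_card_eq_finrank
      (fun x _ => htop x) (by simp [hdim])
  -- the 4-dimensional piece
  have hquad4_mem : ∀ k0 k1 k2 k3 : ℚ, quadQ L u v k0 k1 k2 k3 ∈
      Submodule.span ℚ (Set.range ![(1:L), u, v, u*v]) := by
    intro k0 k1 k2 k3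
    rw [Submodule.mem_span_range_iff_exists_fun]
    refine ⟨![k0,k1,k2,k3], ?_⟩
    rw [Fin.sum_univ_four]
    show k0 • (1:L) + k1 • u + k2 • v + k3 • (u*v) = _
    simp only [Algebra.smul_def, quadQ]
    ring
  have hrep4 : ∀ x ∈ Submodule.span ℚ (Set.range ![(1:L), u, v, u*v]),
      ∃ k : Fin 4 → ℚ, x = quadQ L u v (k 0) (k 1) (k 2) (k 3) := by
    intro x hx
    obtain ⟨k, hk⟩ := (Submodule.mem_span_range_iff_exists_fun ℚ).mp hx
    refine ⟨k, ?_⟩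
    rw [← hk, Fin.sum_univ_four]
    show k 0 • (1:L) + k 1 • u + k 2 • v + k 3 • (u*v) = _
    simp only [Algebra.smul_def, quadQ]
    ring
  have hmul4 : ∀ x y : L, x ∈ Submodule.span ℚ (Set.range ![(1:L), u, v, u*v]) →
      y ∈ Submodule.span ℚ (Set.range ![(1:L), u, v, u*v]) →
      x * y ∈ Submodule.span ℚ (Set.range ![(1:L), u, v, u*v]) := by
    intro x y hx hy
    obtain ⟨b, hb⟩ := hrep4 x hx
    obtain ⟨c, hc⟩ := hrep4 y hy
    rw [hb, hc, quadQ_mul hu hv]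
    apply hquad4_mem
  have h1m4 : (1:L) ∈ Submodule.span ℚ (Set.range ![(1:L), u, v, u*v]) := by
    simpa [quadQ] using hquad4_mem 1 0 0 0
  have hwnot4 : w ∉ Submodule.span ℚ (Set.range ![(1:L), u, v, u*v]) := by
    intro hw4
    obtain ⟨k, hk⟩ := hrep4 w hw4
    have hq : quadQ L u v (k 0) (k 1) (k 2) (k 3) + quadQ L u v (-1) 0 0 0 * w = 0 := by
      rw [← hk]
      simp [quadQ]
    have := (indep_consume hlin _ _ _ _ _ _ _ _ hq).2.2.2.2.1
    norm_num at this
  -- a primitive element cannot lie in the 4-dimensional subalgebra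
  have hprim4 : ∀ (z : L) (c k0 k1 k2 k3 : ℚ), c ≠ 0 →
      algebraMap ℚ L c * z = quadQ L u v k0 k1 k2 k3 →
      IntermediateField.adjoin ℚ {z} = ⊤ → False := by
    intro z c k0 k1 k2 k3 hc hzq hztop
    have hzS : z ∈ Submodule.span ℚ (Set.range ![(1:L), u, v, u*v]) := by
      have hz' : z = (c⁻¹) • (quadQ L u v k0 k1 k2 k3) := by
        rw [Algebra.smul_def, ← hzq, ← mul_assoc, ← map_mul, inv_mul_cancel₀ hc, map_one, one_mul]
      rw [hz']
      exact Submodule.smul_mem _ _ (hquad4_mem k0 k1 k2 k3)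
    have hle : Algebra.adjoin ℚ ({z} : Set L) ≤
        Submodule.toSubalgebra (Submodule.span ℚ (Set.range ![(1:L), u, v, u*v])) h1m4 hmul4 :=
      Algebra.adjoin_le (Set.singleton_subset_iff.mpr hzS)
    apply hwnot4
    apply hle
    have : w ∈ (IntermediateField.adjoin ℚ ({z} : Set L)).toSubalgebra := by
      rw [hztop]; trivial
    rwa [IntermediateField.adjoin_simple_toSubalgebra_of_isAlgebraic (IsIntegral.of_finite ℚ z).isAlgebraic]
      at this
  constructor
  · -- first part : minimal degree > 2
    rw [minDegree]
    have hSne : Set.Nonempty {d : ℕ | ∃ α : L, IntermediateField.adjoin ℚ {α} = ⊤ ∧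
        ∃ f : Polynomial ℚ, f.natDegree = d ∧
          Polynomial.aeval α f = u + algebraMap ℚ L a * v} := by
      obtain ⟨α, hα⟩ := Field.exists_primitive_element ℚ L
      have hmem : (u + algebraMap ℚ L a * v) ∈ Algebra.adjoin ℚ ({α} : Set L) := by
        rw [← IntermediateField.adjoin_simple_toSubalgebra_of_isAlgebraic
          (IsIntegral.of_finite ℚ α).isAlgebraic, hα]
        trivial
      rw [Algebra.adjoin_singleton_eq_range_aeval] at hmem
      obtain ⟨f, hf⟩ := hmem
      exact ⟨f.natDegree, α, hα, f, rfl, hf⟩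
    refine lt_of_lt_of_le (by norm_num : (2:ℕ) < 3) (le_csInf hSne ?_)
    rintro d ⟨α, hαtop, f, hdeg, hfval⟩
    by_contra hlt
    push_neg at hlt
    interval_cases d
    · -- degree 0
      rw [Polynomial.eq_C_of_natDegree_eq_zero hdeg, Polynomial.aeval_C] at hfval
      have hq : quadQ L u v (f.coeff 0) (-1) (-a) 0 + quadQ L u v 0 0 0 0 * w = 0 := by
        simp only [quadQ, map_neg, map_zero, map_one]
        linear_combination hfval
      have := (indep_consume hlin _ _ _ _ _ _ _ _ hq).2.1
      norm_num at this
    · -- degree 1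
      have hf0 : f ≠ 0 := fun h0 => by simp [h0] at hdeg
      have hc1 : f.coeff 1 ≠ 0 := by
        have := Polynomial.leadingCoeff_ne_zero.mpr hf0
        rwa [Polynomial.leadingCoeff, hdeg] at this
      rw [Polynomial.aeval_eq_sum_range, hdeg] at hfval
      simp only [Finset.sum_range_succ, Finset.sum_range_zero, pow_zero, pow_one, zero_add,
        Algebra.smul_def, mul_one] at hfval
      apply hprim4 α (f.coeff 1) (-(f.coeff 0)) 1 a 0 hc1 ?_ hαtop
      simp only [quadQ, map_neg, map_one, map_zero]
      linear_combination hfval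
    · -- degree 2
      have hf0 : f ≠ 0 := fun h0 => by simp [h0] at hdeg
      have hc2 : f.coeff 2 ≠ 0 := by
        have := Polynomial.leadingCoeff_ne_zero.mpr hf0
        rwa [Polynomial.leadingCoeff, hdeg] at this
      rw [Polynomial.aeval_eq_sum_range, hdeg] at hfval
      simp only [Finset.sum_range_succ, Finset.sum_range_zero, pow_zero, pow_one, zero_add,
        Algebra.smul_def, mul_one] at hfval
      obtain ⟨β, hβdef⟩ : ∃ β : L, β = algebraMap ℚ L (2*(f.coeff 2)) * α
          + algebraMap ℚ L (f.coeff 1) := ⟨_, rfl⟩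
      have h2c : (2*(f.coeff 2) : ℚ) ≠ 0 := by simpa using hc2
      have hβtop : IntermediateField.adjoin ℚ {β} = ⊤ := by
        rw [eq_top_iff, ← hαtop, IntermediateField.adjoin_simple_le_iff]
        have hmem := (IntermediateField.adjoin ℚ {β}).smul_mem
          (sub_mem (IntermediateField.mem_adjoin_simple_self ℚ β)
            ((IntermediateField.adjoin ℚ {β}).algebraMap_mem (f.coeff 1)))
          (x := (2*(f.coeff 2))⁻¹)
        have hαeq : α = (2*(f.coeff 2))⁻¹ • (β - algebraMap ℚ L (f.coeff 1)) := by
          rw [hβdef, add_sub_cancel_right, Algebra.smul_def, ← mul_assoc, ← map_mul,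
            inv_mul_cancel₀ h2c, map_one, one_mul]
        rwa [← hαeq] at hmem
      have hβ2 : β^2 = algebraMap ℚ L (4*(f.coeff 2)) * (u + algebraMap ℚ L a * v)
          + algebraMap ℚ L ((f.coeff 1)^2 - 4*(f.coeff 2)*(f.coeff 0)) := by
        rw [hβdef]
        simp only [map_add, map_sub, map_mul, map_pow, map_ofNat]
        linear_combination (4*(algebraMap ℚ L (f.coeff 2))) * hfval
      obtain ⟨b, hb⟩ := hrep β (htop β)
      have hsq : β^2 =
          (quadQ L u v (b 0) (b 1) (b 2) (b 3) * quadQ L u v (b 0) (b 1) (b 2) (b 3))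
          + algebraMap ℚ L (C:ℚ) *
            (quadQ L u v (b 4) (b 5) (b 6) (b 7) * quadQ L u v (b 4) (b 5) (b 6) (b 7))
          + ((quadQ L u v (b 0) (b 1) (b 2) (b 3) * quadQ L u v (b 4) (b 5) (b 6) (b 7))
            + (quadQ L u v (b 0) (b 1) (b 2) (b 3) * quadQ L u v (b 4) (b 5) (b 6) (b 7))) * w := by
        rw [hb, ← hw]; ring
      simp only [quadQ_mul hu hv] at hsq
      rw [quadQ_cmul] at hsq
      have hEQ := hsq.symm.trans hβ2
      have hq : quadQ L u v
          ((b 0*b 0 + (γ:ℚ)*(A:ℚ)*(b 1*b 1) + (γ:ℚ)*(B:ℚ)*(b 2*b 2)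
            + (γ:ℚ)*(A:ℚ)*((γ:ℚ)*(B:ℚ)*(b 3*b 3)))
           + (C:ℚ)*(b 4*b 4 + (γ:ℚ)*(A:ℚ)*(b 5*b 5) + (γ:ℚ)*(B:ℚ)*(b 6*b 6)
            + (γ:ℚ)*(A:ℚ)*((γ:ℚ)*(B:ℚ)*(b 7*b 7)))
           - ((f.coeff 1)^2 - 4*(f.coeff 2)*(f.coeff 0)))
          ((b 0*b 1 + b 1*b 0 + (γ:ℚ)*(B:ℚ)*(b 2*b 3 + b 3*b 2))
           + (C:ℚ)*(b 4*b 5 + b 5*b 4 + (γ:ℚ)*(B:ℚ)*(b 6*b 7 + b 7*b 6))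
           - 4*(f.coeff 2))
          ((b 0*b 2 + b 2*b 0 + (γ:ℚ)*(A:ℚ)*(b 1*b 3 + b 3*b 1))
           + (C:ℚ)*(b 4*b 6 + b 6*b 4 + (γ:ℚ)*(A:ℚ)*(b 5*b 7 + b 7*b 5))
           - 4*(f.coeff 2)*a)
          ((b 0*b 3 + b 3*b 0 + b 1*b 2 + b 2*b 1)
           + (C:ℚ)*(b 4*b 7 + b 7*b 4 + b 5*b 6 + b 6*b 5))
          + quadQ L u v
          (2*(b 0*b 4 + (γ:ℚ)*(A:ℚ)*(b 1*b 5) + (γ:ℚ)*(B:ℚ)*(b 2*b 6)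
            + (γ:ℚ)*(A:ℚ)*((γ:ℚ)*(B:ℚ)*(b 3*b 7))))
          (2*(b 0*b 5 + b 1*b 4 + (γ:ℚ)*(B:ℚ)*(b 2*b 7 + b 3*b 6)))
          (2*(b 0*b 6 + b 2*b 4 + (γ:ℚ)*(A:ℚ)*(b 1*b 7 + b 3*b 5)))
          (2*(b 0*b 7 + b 3*b 4 + b 1*b 6 + b 2*b 5)) * w = 0 := by
        simp only [quadQ, map_add, map_mul, map_sub, map_pow, map_ofNat] at hEQ ⊢
        linear_combination hEQ
      obtain ⟨hK0, hK1, hK2, hK3, hK4, hK5, hK6, hK7⟩ := indep_consume hlin _ _ _ _ _ _ _ _ hq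
      have hXY : quadQ L u v (b 0) (b 1) (b 2) (b 3) * quadQ L u v (b 4) (b 5) (b 6) (b 7) = 0 := by
        rw [quadQ_mul hu hv]
        have e0 : b 0*b 4 + (γ:ℚ)*(A:ℚ)*(b 1*b 5) + (γ:ℚ)*(B:ℚ)*(b 2*b 6)
            + (γ:ℚ)*(A:ℚ)*((γ:ℚ)*(B:ℚ)*(b 3*b 7)) = 0 := by linarith
        have e1 : b 0*b 5 + b 1*b 4 + (γ:ℚ)*(B:ℚ)*(b 2*b 7 + b 3*b 6) = 0 := by linarith
        have e2 : b 0*b 6 + b 2*b 4 + (γ:ℚ)*(A:ℚ)*(b 1*b 7 + b 3*b 5) = 0 := by linarith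
        have e3 : b 0*b 7 + b 3*b 4 + b 1*b 6 + b 2*b 5 = 0 := by linarith
        rw [e0, e1, e2, e3, quadQ_zero]
      rcases mul_eq_zero.mp hXY with hX0 | hY0
      · -- the K(u,v)-part of β vanishes
        obtain ⟨hb0, hb1, hb2, hb3, -, -, -, -⟩ := indep_consume hlin
          (b 0) (b 1) (b 2) (b 3) 0 0 0 0 (by rw [quadQ_zero, zero_mul, add_zero]; exact hX0)
        have hcf4 : (4*(f.coeff 2) : ℚ) ≠ 0 := by simpa using hc2
        have eq1 : (C:ℚ)*(b 4*b 5 + b 5*b 4 + (γ:ℚ)*(B:ℚ)*(b 6*b 7 + b 7*b 6))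
            = 4*(f.coeff 2) := by
          linear_combination hK1 - (2*(b 1))*hb0 - (2*((γ:ℚ)*(B:ℚ))*(b 3))*hb2
        have eq2 : (C:ℚ)*(b 4*b 6 + b 6*b 4 + (γ:ℚ)*(A:ℚ)*(b 5*b 7 + b 7*b 5))
            = 4*(f.coeff 2)*a := by
          linear_combination hK2 - (2*(b 2))*hb0 - (2*((γ:ℚ)*(A:ℚ))*(b 3))*hb1
        have eq3 : b 4*b 7 + b 5*b 6 = 0 := by
          have h3' : (C:ℚ)*(2*(b 4*b 7 + b 5*b 6)) = 0 := by
            linear_combination hK3 - (2*(b 3))*hb0 - (2*(b 2))*hb1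
          rcases mul_eq_zero.mp h3' with h | h
          · exact absurd h hCQ
          · linarith
        have hy0 : b 4 ≠ 0 := by
          intro h0
          have h12 : b 5 * b 6 = 0 := by linear_combination eq3 - (b 7)*h0
          rcases mul_eq_zero.mp h12 with h5 | h6
          · exact mul_ne_zero hcf4 ha (by
              linear_combination -eq2 + ((C:ℚ)*(b 6 + b 6))*h0
                + ((C:ℚ)*((γ:ℚ)*(A:ℚ))*(b 7 + b 7))*h5)
          · exact hcf4 (by
              linear_combination -eq1 + ((C:ℚ)*(b 5 + b 5))*h0
                + ((C:ℚ)*((γ:ℚ)*(B:ℚ))*(b 7 + b 7))*h6)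
        have hy1 : b 5 ≠ 0 := by
          intro h5
          have h47 : b 4 * b 7 = 0 := by linear_combination eq3 - (b 6)*h5
          rcases mul_eq_zero.mp h47 with h | h7
          · exact hy0 h
          · exact hcf4 (by
              linear_combination -eq1 + ((C:ℚ)*(b 4 + b 4))*h5
                + ((C:ℚ)*((γ:ℚ)*(B:ℚ))*(b 6 + b 6))*h7)
        have hy2 : b 6 ≠ 0 := by
          intro h6
          have h47 : b 4 * b 7 = 0 := by linear_combination eq3 - (b 5)*h6
          rcases mul_eq_zero.mp h47 with h | h7
          · exact hy0 h
          · exact mul_ne_zero hcf4 ha (by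
              linear_combination -eq2 + ((C:ℚ)*(b 4 + b 4))*h6
                + ((C:ℚ)*((γ:ℚ)*(A:ℚ))*(b 5 + b 5))*h7)
        have hE : b 4*b 6 + (γ:ℚ)*(A:ℚ)*(b 5*b 7) = a*(b 4*b 5 + (γ:ℚ)*(B:ℚ)*(b 6*b 7)) := by
          have h2C : (2*(C:ℚ)) ≠ 0 := by simpa using hCQ
          apply mul_left_cancel₀ h2C
          linear_combination eq2 - a*eq1
        have hP : (b 6)*((b 4)^2 - (γ:ℚ)*(A:ℚ)*(b 5)^2)
            = a*((b 5)*((b 4)^2 - (γ:ℚ)*(B:ℚ)*(b 6)^2)) := by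
          linear_combination (b 4)*hE - ((γ:ℚ)*(A:ℚ)*(b 5) - a*((γ:ℚ)*(B:ℚ)*(b 6)))*eq3
        have hm : (b 5)/(b 4) ≠ 0 := div_ne_zero hy1 hy0
        have hrel : ((b 6)/(b 4))*(1 - (γ:ℚ)*(A:ℚ)*((b 5)/(b 4))^2)
            = a*((b 5)/(b 4))*(1 - (γ:ℚ)*(B:ℚ)*((b 6)/(b 4))^2) := by
          field_simp
          linear_combination hP
        exact no_point A B a γ hγQ ha hBQ habA _ _ hm hrel htors
      · -- the w-part of β vanishes : β lies in the 4-dimensional subalgebra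
        apply hprim4 β 1 (b 0) (b 1) (b 2) (b 3) one_ne_zero ?_ hβtop
        rw [map_one, one_mul, hb, hY0, zero_mul, add_zero]
  · -- second part : finrank = 2
    have hθS : (u + algebraMap ℚ L a * v) ∈
        Submodule.span ℚ (Set.range ![(1:L), u, v, u*v]) := by
      have hθq : u + algebraMap ℚ L a * v = quadQ L u v 0 1 a 0 := by simp [quadQ]
      rw [hθq]; apply hquad4_mem
    have hKle : (IntermediateField.adjoin ℚ {u + algebraMap ℚ L a * v}).toSubalgebra.toSubmodule
        ≤ Submodule.span ℚ (Set.range ![(1:L), u, v, u*v]) := by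
      intro x hx
      have hle : Algebra.adjoin ℚ ({u + algebraMap ℚ L a * v} : Set L) ≤
          Submodule.toSubalgebra (Submodule.span ℚ (Set.range ![(1:L), u, v, u*v])) h1m4 hmul4 :=
        Algebra.adjoin_le (Set.singleton_subset_iff.mpr hθS)
      apply hle
      rwa [IntermediateField.adjoin_simple_toSubalgebra_of_isAlgebraic
        (IsIntegral.of_finite ℚ (u + algebraMap ℚ L a * v)).isAlgebraic] at hx
    -- reverse inclusion
    have hθmem : (u + algebraMap ℚ L a * v) ∈
        IntermediateField.adjoin ℚ {u + algebraMap ℚ L a * v} :=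
      IntermediateField.mem_adjoin_simple_self ℚ _
    have h2a : (2*a : ℚ) ≠ 0 := by simpa using ha
    have heqUV : algebraMap ℚ L (2*a) * (u*v) = (u + algebraMap ℚ L a * v)^2
        - algebraMap ℚ L ((γ:ℚ)*(A:ℚ) + a^2*((γ:ℚ)*(B:ℚ))) := by
      simp only [map_add, map_mul, map_pow, map_ofNat]
      linear_combination (-1 : L) * hu' + (-(algebraMap ℚ L a)^2) * hv'
    have huvK : u*v ∈ IntermediateField.adjoin ℚ {u + algebraMap ℚ L a * v} := by
      have h1 : u*v = ((2*a)⁻¹) • ((u + algebraMap ℚ L a * v)^2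
          - algebraMap ℚ L ((γ:ℚ)*(A:ℚ) + a^2*((γ:ℚ)*(B:ℚ)))) := by
        rw [Algebra.smul_def, ← heqUV, ← mul_assoc, ← map_mul, inv_mul_cancel₀ h2a,
          map_one, one_mul]
      rw [h1]
      exact (IntermediateField.adjoin ℚ _).smul_mem
        (sub_mem (pow_mem hθmem 2) ((IntermediateField.adjoin ℚ _).algebraMap_mem _))
    have hdet : ((γ:ℚ)*(A:ℚ) - a^2*((γ:ℚ)*(B:ℚ))) ≠ 0 := by
      intro hzero
      apply habA
      have h7 : (γ:ℚ)*((A:ℚ) - a^2*(B:ℚ)) = 0 := by linear_combination hzero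
      rcases mul_eq_zero.mp h7 with h4 | h4
      · exact absurd h4 hγQ
      · linarith
    have heqU : algebraMap ℚ L ((γ:ℚ)*(A:ℚ)) * (u + algebraMap ℚ L a * v)
        - algebraMap ℚ L a * ((u*v) * (u + algebraMap ℚ L a * v))
        = algebraMap ℚ L ((γ:ℚ)*(A:ℚ) - a^2*((γ:ℚ)*(B:ℚ))) * u := by
      simp only [map_sub, map_mul, map_pow]
      linear_combination (-(algebraMap ℚ L a * v)) * hu' + (-(algebraMap ℚ L a)^2 * u) * hv'
    have huK : u ∈ IntermediateField.adjoin ℚ {u + algebraMap ℚ L a * v} := by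
      have h1 : u = (((γ:ℚ)*(A:ℚ) - a^2*((γ:ℚ)*(B:ℚ)))⁻¹) •
          (algebraMap ℚ L ((γ:ℚ)*(A:ℚ)) * (u + algebraMap ℚ L a * v)
           - algebraMap ℚ L a * ((u*v) * (u + algebraMap ℚ L a * v))) := by
        rw [Algebra.smul_def, heqU, ← mul_assoc, ← map_mul, inv_mul_cancel₀ hdet,
          map_one, one_mul]
      have hmem := (IntermediateField.adjoin ℚ {u + algebraMap ℚ L a * v}).smul_mem
        (sub_mem (mul_mem ((IntermediateField.adjoin ℚ {u + algebraMap ℚ L a * v}).algebraMap_mem ((γ:ℚ)*(A:ℚ))) hθmem)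
          (mul_mem ((IntermediateField.adjoin ℚ {u + algebraMap ℚ L a * v}).algebraMap_mem a) (mul_mem huvK hθmem)))
        (x := (((γ:ℚ)*(A:ℚ) - a^2*((γ:ℚ)*(B:ℚ)))⁻¹))
      rwa [← h1] at hmem
    have hvK : v ∈ IntermediateField.adjoin ℚ {u + algebraMap ℚ L a * v} := by
      have h1 : v = (a⁻¹) • ((u + algebraMap ℚ L a * v) - u) := by
        rw [Algebra.smul_def, show u + algebraMap ℚ L a * v - u = algebraMap ℚ L a * v by ring,
          ← mul_assoc, ← map_mul, inv_mul_cancel₀ ha, map_one, one_mul]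
      have hmem := (IntermediateField.adjoin ℚ {u + algebraMap ℚ L a * v}).smul_mem
        (sub_mem hθmem huK) (x := a⁻¹)
      rwa [← h1] at hmem
    have hKge : Submodule.span ℚ (Set.range ![(1:L), u, v, u*v])
        ≤ (IntermediateField.adjoin ℚ {u + algebraMap ℚ L a * v}).toSubalgebra.toSubmodule := by
      rw [Submodule.span_le]
      rintro t ⟨i, rfl⟩
      fin_cases i
      · exact (IntermediateField.adjoin ℚ _).one_mem
      · exact huK
      · exact hvK
      · exact huvK
    have hKsub : (IntermediateField.adjoin ℚ {u + algebraMap ℚ L a * v}).toSubalgebra.toSubmodule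
        = Submodule.span ℚ (Set.range ![(1:L), u, v, u*v]) := le_antisymm hKle hKge
    have hlin4 : LinearIndependent ℚ ![(1:L), u, v, u*v] := by
      have hcomp : ![(1:L), u, v, u*v]
          = ![(1:L), u, v, u*v, w, u*w, v*w, u*v*w] ∘ Fin.castLE (by norm_num) := by
        funext i; fin_cases i <;> rfl
      rw [hcomp]
      exact hlin.comp _ (Fin.castLE_injective _)
    have hfr4 : Module.finrank ℚ (IntermediateField.adjoin ℚ {u + algebraMap ℚ L a * v}) = 4 := by
      rw [← IntermediateField.finrank_eq_finrank_subalgebra,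
        ← Subalgebra.finrank_toSubmodule, hKsub, finrank_span_eq_card hlin4]
      rfl
    have htower := Module.finrank_mul_finrank ℚ
      (IntermediateField.adjoin ℚ {u + algebraMap ℚ L a * v}) L
    rw [hfr4, hdim] at htower
    omega
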